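/- Let ω ⊂ Ω_{C°} be a nonempty compact set and f a positive continuous function on ω. Then the Wulff shape [f] = C ∩ ⋂_{v∈ω} {x : ⟨x,v⟩ ≤ −f(v)} is a C-pseudo-cone; moreover 0 ∉ [f] and the recession cone of [f] equals C. -/

import Mathlib

open MeasureTheory Metric Set Filter
open scoped RealInnerProductSpace ENNReal Topology

/-- The standard Gaussian measure on `ℝⁿ`. -/
noncomputable def gaussMeasure (n : ℕ) : Measure (EuclideanSpace ℝ (Fin n)) :=
  volume.withDensity fun x =>
    ENNReal.ofReal ((2 * Real.pi) ^ (-(n : ℝ) / 2) * Real.exp (-‖x‖ ^ 2 / 2))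

/-- The polar cone of a set `C`. -/
def polarCone {n : ℕ} (C : Set (EuclideanSpace ℝ (Fin n))) : Set (EuclideanSpace ℝ (Fin n)) :=
  {x | ∀ y ∈ C, ⟪x, y⟫ ≤ 0}

/-- A pointed, `n`-dimensional (nonempty interior) closed convex cone. -/
def IsPointedClosedConvexCone {n : ℕ} (C : Set (EuclideanSpace ℝ (Fin n))) : Prop :=
  IsClosed C ∧ Convex ℝ C ∧ (∀ x ∈ C, ∀ l : ℝ, 0 ≤ l → l • x ∈ C) ∧
    C ∩ (-C) = {0} ∧ (interior C).Nonempty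

/-- `E` is a `C`-pseudo-cone: a nonempty closed convex subset of `C` not containing the
origin, closed under dilations by `λ ≥ 1`, whose recession cone equals `C`. -/
def IsPseudoCone {n : ℕ} (C E : Set (EuclideanSpace ℝ (Fin n))) : Prop :=
  E.Nonempty ∧ IsClosed E ∧ Convex ℝ E ∧ E ⊆ C ∧ (0 : EuclideanSpace ℝ (Fin n)) ∉ E ∧
    (∀ x ∈ E, ∀ l : ℝ, 1 ≤ l → l • x ∈ E) ∧ {x | ∀ y ∈ E, y + x ∈ E} = C

/-- The support function `h_E`. -/
noncomputable def suppFn {n : ℕ} (E : Set (EuclideanSpace ℝ (Fin n)))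
    (v : EuclideanSpace ℝ (Fin n)) : ℝ :=
  sSup ((fun x => ⟪x, v⟫) '' E)

/-- The Wulff shape of a function `f` on `ω`, relative to the cone `C`. -/
def wulff {n : ℕ} (C ω : Set (EuclideanSpace ℝ (Fin n)))
    (f : EuclideanSpace ℝ (Fin n) → ℝ) : Set (EuclideanSpace ℝ (Fin n)) :=
  C ∩ ⋂ v ∈ ω, {x | ⟪x, v⟫ ≤ -f v}

/-- `Ω_{C°} = int C° ∩ 𝕊^{n-1}`, the spherical image of the interior of the polar cone. -/
def omegaPolar {n : ℕ} (C : Set (EuclideanSpace ℝ (Fin n))) : Set (EuclideanSpace ℝ (Fin n)) :=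
  interior (polarCone C) ∩ sphere 0 1

lemma aux_inner_lt {n : ℕ} {C : Set (EuclideanSpace ℝ (Fin n))}
    {x₀ v : EuclideanSpace ℝ (Fin n)} (hx : x₀ ∈ interior C)
    (hv : v ∈ polarCone C) (hv0 : v ≠ 0) : ⟪x₀, v⟫ < 0 := by
  obtain ⟨ε, hε, hball⟩ := Metric.isOpen_iff.1 isOpen_interior x₀ hx
  have hvn : 0 < ‖v‖ := norm_pos_iff.2 hv0
  set δ : ℝ := ε / 2 / ‖v‖ with hδdef
  have hδ : 0 < δ := by positivity
  have hδv : δ * ‖v‖ = ε / 2 := div_mul_cancel₀ _ (ne_of_gt hvn)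
  have hmem : x₀ + δ • v ∈ C := by
    apply interior_subset
    apply hball
    simp only [mem_ball, dist_eq_norm, add_sub_cancel_left, norm_smul, Real.norm_eq_abs,
      abs_of_pos hδ]
    rw [hδv]; linarith
  have := hv _ hmem
  rw [inner_add_right, real_inner_smul_right, real_inner_self_eq_norm_sq] at this
  have hpos : 0 < δ * ‖v‖ ^ 2 := by positivity
  have h2 : ⟪v, x₀⟫ < 0 := by linarith
  rwa [real_inner_comm] at h2

theorem stmt_12 {n : ℕ} (hn : 2 ≤ n) (C : Set (EuclideanSpace ℝ (Fin n)))
    (hC : IsPointedClosedConvexCone C)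
    (ω : Set (EuclideanSpace ℝ (Fin n))) (hω : ω.Nonempty) (hωc : IsCompact ω)
    (hωΩ : ω ⊆ omegaPolar C)
    (f : EuclideanSpace ℝ (Fin n) → ℝ) (hf : ContinuousOn f ω) (hfpos : ∀ v ∈ ω, 0 < f v) :
    IsPseudoCone C (wulff C ω f) := by
  obtain ⟨hCcl, hCconv, hCcone, hCpt, x₀, hx₀⟩ := hC
  have hmemW : ∀ x, x ∈ wulff C ω f ↔ x ∈ C ∧ ∀ v ∈ ω, ⟪x, v⟫ ≤ -f v := by
    intro x; simp [wulff, mem_iInter₂]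
  have hvpol : ∀ v ∈ ω, v ∈ polarCone C := fun v hv => interior_subset (hωΩ hv).1
  have hvne : ∀ v ∈ ω, v ≠ 0 := by
    intro v hv h0
    have := (hωΩ hv).2
    rw [mem_sphere, dist_eq_norm, h0] at this
    simp at this
  -- a point deep inside the wulff shape
  have hcont : ContinuousOn (fun v : EuclideanSpace ℝ (Fin n) => ⟪x₀, v⟫) ω :=
    (continuous_const.inner continuous_id).continuousOn
  obtain ⟨v₁, hv₁, hmax⟩ := hωc.exists_isMaxOn hω hcont
  set c : ℝ := -⟪x₀, v₁⟫ with hcdef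
  have hc : 0 < c := by
    have := aux_inner_lt hx₀ (hvpol v₁ hv₁) (hvne v₁ hv₁); rw [hcdef]; linarith
  have hcb : ∀ v ∈ ω, ⟪x₀, v⟫ ≤ -c := by
    intro v hv; have := hmax hv; simpa [hcdef] using this
  obtain ⟨vM, hvM, hfmax⟩ := hωc.exists_isMaxOn hω hf
  set M : ℝ := f vM with hMdef
  have hM : 0 < M := hfpos vM hvM
  have hx₀C : x₀ ∈ C := interior_subset hx₀
  set y₀ : EuclideanSpace ℝ (Fin n) := (M / c) • x₀ with hy₀def
  have hy₀ : y₀ ∈ wulff C ω f := by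
    rw [hmemW]
    constructor
    · exact hCcone x₀ hx₀C _ (le_of_lt (by positivity))
    · intro v hv
      rw [hy₀def, real_inner_smul_left]
      have h1 : ⟪x₀, v⟫ ≤ -c := hcb v hv
      have h2 : f v ≤ M := hfmax hv
      have hMc : 0 < M / c := by positivity
      nlinarith [mul_le_mul_of_nonneg_left h1 (le_of_lt hMc),
        div_mul_cancel₀ M (ne_of_gt hc)]
  refine ⟨⟨y₀, hy₀⟩, ?_, ?_, inter_subset_left, ?_, ?_, ?_⟩
  · exact hCcl.inter (isClosed_biInter fun v _ =>
      isClosed_le (continuous_id.inner continuous_const) continuous_const)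
  · exact hCconv.inter (convex_iInter₂ fun v _ =>
      convex_halfSpace_le ⟨fun a b => inner_add_left a b v,
        fun r a => real_inner_smul_left a v r⟩ _)
  · intro h0
    obtain ⟨v, hv⟩ := hω
    have := ((hmemW 0).1 h0).2 v hv
    rw [inner_zero_left] at this
    linarith [hfpos v hv]
  · intro x hx l hl
    obtain ⟨hxC, hxI⟩ := (hmemW x).1 hx
    rw [hmemW]
    refine ⟨hCcone x hxC l (by linarith), fun v hv => ?_⟩
    rw [real_inner_smul_left]
    have h1 := hxI v hv
    have h2 := hfpos v hv
    nlinarith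
  · ext x
    simp only [mem_setOf_eq]
    constructor
    · intro h
      have hk : ∀ k : ℕ, y₀ + (k : ℝ) • x ∈ wulff C ω f := by
        intro k
        induction k with
        | zero => simpa using hy₀
        | succ k ih =>
          have := h _ ih
          have heq : y₀ + (k : ℝ) • x + x = y₀ + ((k : ℝ) + 1) • x := by
            rw [add_smul, one_smul, add_assoc]
          rw [heq] at this
          simpa using this
      have hseq : ∀ k : ℕ, ((k : ℝ) + 1)⁻¹ • y₀ + x ∈ C := by
        intro k
        have h1 : y₀ + ((k : ℝ) + 1) • x ∈ C := ((hmemW _).1 (by simpa using hk (k + 1))).1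
        have h2 := hCcone _ h1 (((k : ℝ) + 1)⁻¹) (by positivity)
        have hne' : (k : ℝ) + 1 ≠ 0 := by positivity
        have key : ((k : ℝ) + 1)⁻¹ • (y₀ + ((k : ℝ) + 1) • x)
            = ((k : ℝ) + 1)⁻¹ • y₀ + x := by
          rw [smul_add, inv_smul_smul₀ hne']
        exact key ▸ h2
      have htend : Tendsto (fun k : ℕ => ((k : ℝ) + 1)⁻¹ • y₀ + x) atTop (𝓝 x) := by
        have h0 : Tendsto (fun k : ℕ => ((k : ℝ) + 1)⁻¹) atTop (𝓝 0) := by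
          simpa using (tendsto_one_div_add_atTop_nhds_zero_nat :
            Tendsto (fun k : ℕ => 1 / ((k : ℝ) + 1)) atTop (𝓝 0))
        have := (h0.smul_const y₀).add_const x
        simpa using this
      exact hCcl.mem_of_tendsto htend (Eventually.of_forall hseq)
    · intro hxC y hy
      obtain ⟨hyC, hyI⟩ := (hmemW y).1 hy
      rw [hmemW]
      constructor
      · have hmid : (1 / 2 : ℝ) • y + (1 / 2 : ℝ) • x ∈ C :=
          hCconv hyC hxC (by norm_num) (by norm_num) (by norm_num)
        have := hCcone _ hmid 2 (by norm_num)
        rwa [smul_add, smul_smul, smul_smul, (by norm_num : (2 : ℝ) * (1 / 2) = 1),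
          one_smul, one_smul] at this
      · intro v hv
        have h1 := hyI v hv
        have h2 : ⟪v, x⟫ ≤ 0 := hvpol v hv x hxC
        rw [real_inner_comm] at h2
        rw [inner_add_left]
        linarith
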